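/- Deterministic core of Theorem 1(c) (coarsening for K < K₀): Let n ≥ 1 be an integer, d : {1,…,n}² → ℝ symmetric, and let {G₁,…,G_{K₀}} be a partition of {1,…,n} into K₀ nonempty groups that is d-separated. Then, for every choice of tie-breaking at each step and for every integer K with 1 ≤ K < K₀, the partition {G₁,…,G_{K₀}} is a refinement of the HAC partition P^{n−K} into K clusters. -/
import Mathlib


open Finset

/-- Complete-linkage dissimilarity `Δ(S,S') = max_{i ∈ S, j ∈ S'} d i j`, as an
extended real (so that the value over an empty index set is `⊥`). -/
noncomputable def cLink {n : ℕ} (d : Fin n → Fin n → ℝ) (S S' : Finset (Fin n)) : EReal :=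
  sSup {x : EReal | ∃ i ∈ S, ∃ j ∈ S', x = (d i j : EReal)}

/-- Within-cluster dissimilarity `Δ(C) = max_{i,j ∈ C, i ≠ j} d i j`, as an extended real;
for a singleton (or empty) cluster the value is `⊥`, which is smaller than every real. -/
noncomputable def cDiam {n : ℕ} (d : Fin n → Fin n → ℝ) (C : Finset (Fin n)) : EReal :=
  sSup {x : EReal | ∃ i ∈ C, ∃ j ∈ C, i ≠ j ∧ x = (d i j : EReal)}

/-- The initial partition of `{1,…,n}` into `n` singleton clusters. -/
def singletonPartition (n : ℕ) : Finset (Finset (Fin n)) :=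
  Finset.univ.image fun i : Fin n => ({i} : Finset (Fin n))

/-- `Q` is obtained from `P` by merging one pair of distinct clusters attaining the
minimum of the complete-linkage dissimilarity `Δ` over all pairs of distinct clusters. -/
def IsMergeStep {n : ℕ} (d : Fin n → Fin n → ℝ) (P Q : Finset (Finset (Fin n))) : Prop :=
  ∃ C ∈ P, ∃ C' ∈ P, C ≠ C' ∧
    (∀ D ∈ P, ∀ D' ∈ P, D ≠ D' → cLink d C C' ≤ cLink d D D') ∧
    Q = insert (C ∪ C') ((P.erase C).erase C')

/-- A run of the complete-linkage HAC algorithm (with an arbitrary choice of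
tie-breaking at each step): `P 0` is the singleton partition and for every
`r < n - 1`, `P (r+1)` is obtained from `P r` by a merge step. -/
def IsHACChain {n : ℕ} (d : Fin n → Fin n → ℝ) (P : ℕ → Finset (Finset (Fin n))) : Prop :=
  P 0 = singletonPartition n ∧ ∀ r, r < n - 1 → IsMergeStep d (P r) (P (r + 1))

/-- `G` is a partition of `{1,…,n}` into `K₀` nonempty groups. -/
def IsGroupPartition {n K₀ : ℕ} (G : Fin K₀ → Finset (Fin n)) : Prop :=
  (∀ k, (G k).Nonempty) ∧ (∀ i : Fin n, ∃ k, i ∈ G k) ∧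
    ∀ k k' : Fin K₀, k ≠ k' → Disjoint (G k) (G k')

/-- The partition `G` is `d`-separated: every within-group distance is strictly smaller
than every between-group distance (vacuously true when `K₀ = 1`). -/
def IsSeparated {n K₀ : ℕ} (d : Fin n → Fin n → ℝ) (G : Fin K₀ → Finset (Fin n)) : Prop :=
  ∀ k : Fin K₀, ∀ i ∈ G k, ∀ j ∈ G k, i ≠ j →
    ∀ k₁ k₂ : Fin K₀, k₁ ≠ k₂ → ∀ a ∈ G k₁, ∀ b ∈ G k₂, d i j < d a b

/-- `A` is a refinement of `B`: every element of `A` is a subset of some element of `B`. -/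
def IsRefinement {n : ℕ} (A B : Finset (Finset (Fin n))) : Prop :=
  ∀ C ∈ A, ∃ D ∈ B, C ⊆ D

/-! ### Auxiliary lemmas -/

lemma le_cLink {n : ℕ} (d : Fin n → Fin n → ℝ) {S S' : Finset (Fin n)} {i j : Fin n}
    (hi : i ∈ S) (hj : j ∈ S') : (d i j : EReal) ≤ cLink d S S' :=
  le_sSup ⟨i, hi, j, hj, rfl⟩

lemma cLink_exists_eq {n : ℕ} (d : Fin n → Fin n → ℝ) {S S' : Finset (Fin n)}
    (hS : S.Nonempty) (hS' : S'.Nonempty) :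
    ∃ i ∈ S, ∃ j ∈ S', cLink d S S' = (d i j : EReal) := by
  have hfin : {x : EReal | ∃ i ∈ S, ∃ j ∈ S', x = (d i j : EReal)}.Finite := by
    apply Set.Finite.subset (Set.finite_range fun p : Fin n × Fin n => (d p.1 p.2 : EReal))
    rintro x ⟨i, hi, j, hj, rfl⟩; exact ⟨(i, j), rfl⟩
  have hne : {x : EReal | ∃ i ∈ S, ∃ j ∈ S', x = (d i j : EReal)}.Nonempty := by
    obtain ⟨i, hi⟩ := hS; obtain ⟨j, hj⟩ := hS'
    exact ⟨_, i, hi, j, hj, rfl⟩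
  obtain ⟨i, hi, j, hj, hx⟩ := hne.csSup_mem hfin
  exact ⟨i, hi, j, hj, hx⟩

/-- `P` is a partition of `Fin n`. -/
def IsPart {n : ℕ} (P : Finset (Finset (Fin n))) : Prop :=
  (∀ C ∈ P, C.Nonempty) ∧ (∀ i : Fin n, ∃ C ∈ P, i ∈ C) ∧
    (∀ C ∈ P, ∀ C' ∈ P, C ≠ C' → Disjoint C C')

lemma isPart_singleton (n : ℕ) : IsPart (singletonPartition n) := by
  refine ⟨?_, ?_, ?_⟩
  · intro C hC
    simp only [singletonPartition, mem_image, mem_univ, true_and] at hC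
    obtain ⟨i, rfl⟩ := hC
    exact ⟨i, mem_singleton_self i⟩
  · intro i
    exact ⟨{i}, by simp [singletonPartition], mem_singleton_self i⟩
  · intro C hC C' hC' hne
    simp only [singletonPartition, mem_image, mem_univ, true_and] at hC hC'
    obtain ⟨i, rfl⟩ := hC; obtain ⟨j, rfl⟩ := hC'
    simp only [Finset.disjoint_singleton]
    intro h; exact hne (by rw [h])

lemma card_singletonPartition (n : ℕ) : (singletonPartition n).card = n := by
  rw [singletonPartition, Finset.card_image_of_injective _ Finset.singleton_injective,
    Finset.card_univ, Fintype.card_fin]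

lemma merge_isPart {n : ℕ} {d : Fin n → Fin n → ℝ} {P Q : Finset (Finset (Fin n))}
    (hpart : IsPart P) (hm : IsMergeStep d P Q) :
    IsPart Q ∧ Q.card + 1 = P.card := by
  obtain ⟨C, hC, C', hC', hne, _, rfl⟩ := hm
  obtain ⟨hne', hcov, hdis⟩ := hpart
  have hCn : C.Nonempty := hne' C hC
  have hmemQ : ∀ D ∈ P, D ≠ C → D ≠ C' → D ∈ (P.erase C).erase C' := fun D hD h1 h2 =>
    mem_erase.2 ⟨h2, mem_erase.2 ⟨h1, hD⟩⟩
  have hnotmem : C ∪ C' ∉ (P.erase C).erase C' := by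
    intro h
    have hDP := Finset.mem_of_mem_erase (Finset.mem_of_mem_erase h)
    have h1 : C ∪ C' ≠ C' := Finset.ne_of_mem_erase h
    have h2 : C ∪ C' ≠ C := Finset.ne_of_mem_erase (Finset.mem_of_mem_erase h)
    have hdCC : Disjoint (C ∪ C') C := hdis _ hDP _ hC h2
    obtain ⟨a, ha⟩ := hCn
    exact Finset.disjoint_left.mp hdCC (Finset.mem_union_left _ ha) ha
  constructor
  · refine ⟨?_, ?_, ?_⟩
    · intro D hD
      rcases Finset.mem_insert.1 hD with rfl | hD
      · exact hCn.mono Finset.subset_union_left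
      · exact hne' _ (Finset.mem_of_mem_erase (Finset.mem_of_mem_erase hD))
    · intro i
      obtain ⟨D, hD, hiD⟩ := hcov i
      by_cases h1 : D = C
      · exact ⟨C ∪ C', Finset.mem_insert_self _ _, Finset.mem_union_left _ (h1 ▸ hiD)⟩
      by_cases h2 : D = C'
      · exact ⟨C ∪ C', Finset.mem_insert_self _ _, Finset.mem_union_right _ (h2 ▸ hiD)⟩
      · exact ⟨D, Finset.mem_insert_of_mem (hmemQ D hD h1 h2), hiD⟩
    · intro D hD D' hD' hDD'
      rcases Finset.mem_insert.1 hD with rfl | hD <;>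
        rcases Finset.mem_insert.1 hD' with rfl | hD'
      · exact absurd rfl hDD'
      · have hDP := Finset.mem_of_mem_erase (Finset.mem_of_mem_erase hD')
        have h1 : D' ≠ C' := Finset.ne_of_mem_erase hD'
        have h2 : D' ≠ C := Finset.ne_of_mem_erase (Finset.mem_of_mem_erase hD')
        exact Finset.disjoint_union_left.2
          ⟨hdis _ hC _ hDP (Ne.symm h2), hdis _ hC' _ hDP (Ne.symm h1)⟩
      · have hDP := Finset.mem_of_mem_erase (Finset.mem_of_mem_erase hD)
        have h1 : D ≠ C' := Finset.ne_of_mem_erase hD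
        have h2 : D ≠ C := Finset.ne_of_mem_erase (Finset.mem_of_mem_erase hD)
        exact (Finset.disjoint_union_left.2
          ⟨hdis _ hC _ hDP (Ne.symm h2), hdis _ hC' _ hDP (Ne.symm h1)⟩).symm
      · exact hdis _ (Finset.mem_of_mem_erase (Finset.mem_of_mem_erase hD)) _
          (Finset.mem_of_mem_erase (Finset.mem_of_mem_erase hD')) hDD'
  · rw [Finset.card_insert_of_notMem hnotmem,
      Finset.card_erase_of_mem (mem_erase.2 ⟨Ne.symm hne, hC'⟩), Finset.card_erase_of_mem hC]
    have h2 : 2 ≤ P.card := Finset.one_lt_card.2 ⟨C, hC, C', hC', hne⟩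
    omega

/-- Counting: a partition refining `G` has at least `K₀` parts; with exactly `K₀`
parts, `G` refines it. -/
lemma refine_card {n K₀ : ℕ} {G : Fin K₀ → Finset (Fin n)} (hG : IsGroupPartition G)
    {P : Finset (Finset (Fin n))} (hpart : IsPart P)
    (href : ∀ C ∈ P, ∃ k, C ⊆ G k) :
    K₀ ≤ P.card ∧ (P.card = K₀ → ∀ k, ∃ D ∈ P, G k ⊆ D) := by
  have huniq : ∀ (C : Finset (Fin n)), C.Nonempty → ∀ k k', C ⊆ G k → C ⊆ G k' → k = k' := by
    intro C ⟨a, ha⟩ k k' h1 h2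
    by_contra hkk
    exact Finset.disjoint_left.mp (hG.2.2 k k' hkk) (h1 ha) (h2 ha)
  have hg : ∀ k : Fin K₀, ∃ C, C ∈ P ∧ C ⊆ G k := by
    intro k
    obtain ⟨i, hi⟩ := hG.1 k
    obtain ⟨C, hCP, hiC⟩ := hpart.2.1 i
    obtain ⟨k', hk'⟩ := href C hCP
    have : k' = k := by
      by_contra hkk
      exact Finset.disjoint_left.mp (hG.2.2 k' k hkk) (hk' hiC) hi
    exact ⟨C, hCP, this ▸ hk'⟩
  choose g hgP hgsub using hg
  have hinj : Set.InjOn g (Finset.univ : Finset (Fin K₀)) := by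
    intro k _ k' _ hgg
    exact huniq (g k) (hpart.1 _ (hgP k)) k k' (hgsub k) (hgg ▸ hgsub k')
  have hle : K₀ ≤ P.card := by
    have := Finset.card_le_card_of_injOn g (fun k _ => hgP k) hinj
    simpa using this
  refine ⟨hle, fun hcard k => ?_⟩
  have himg : Finset.univ.image g = P := by
    apply Finset.eq_of_subset_of_card_le
    · intro C hC
      obtain ⟨m, _, rfl⟩ := Finset.mem_image.1 hC
      exact hgP m
    · rw [Finset.card_image_of_injOn hinj, hcard]; simp
  refine ⟨g k, hgP k, ?_⟩
  intro j hj
  obtain ⟨B, hBP, hjB⟩ := hpart.2.1 j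
  obtain ⟨m, _, rfl⟩ := Finset.mem_image.1 (himg ▸ hBP)
  have : m = k := by
    by_contra hkk
    exact Finset.disjoint_left.mp (hG.2.2 m k hkk) (hgsub m hjB) hj
  exact this ▸ hjB

/-- Phase 1: while there are more clusters than groups, a merge step preserves
"every cluster is contained in some group". -/
lemma step_phase1 {n K₀ : ℕ} {d : Fin n → Fin n → ℝ} {G : Fin K₀ → Finset (Fin n)}
    (hG : IsGroupPartition G) (hsep : IsSeparated d G) (hK₀ : 0 < K₀)
    {P Q : Finset (Finset (Fin n))} (hpart : IsPart P)
    (href : ∀ C ∈ P, ∃ k, C ⊆ G k) (hcard : K₀ < P.card)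
    (hm : IsMergeStep d P Q) :
    ∀ C ∈ Q, ∃ k, C ⊆ G k := by
  obtain ⟨C, hC, C', hC', hne, hmin, rfl⟩ := hm
  intro D hD
  rcases Finset.mem_insert.1 hD with rfl | hD
  · -- the merged cluster: show C and C' lie in the same group
    obtain ⟨k₁, hk₁⟩ := href C hC
    obtain ⟨k₂, hk₂⟩ := href C' hC'
    by_cases hk : k₁ = k₂
    · exact ⟨k₁, Finset.union_subset hk₁ (hk ▸ hk₂)⟩
    exfalso
    -- pigeonhole: two distinct clusters in the same group
    have hpi : ∃ A ∈ P, ∃ B ∈ P, A ≠ B ∧ ∃ k, A ⊆ G k ∧ B ⊆ G k := by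
      classical
      set f : Finset (Fin n) → Fin K₀ := fun C =>
        if h : ∃ k, C ⊆ G k then h.choose else ⟨0, hK₀⟩ with hf
      have hmap : ∀ C ∈ P, f C ∈ (Finset.univ : Finset (Fin K₀)) := fun _ _ => mem_univ _
      have hcard' : (Finset.univ : Finset (Fin K₀)).card < P.card := by simpa using hcard
      obtain ⟨A, hA, B, hB, hAB, hfAB⟩ :=
        Finset.exists_ne_map_eq_of_card_lt_of_maps_to hcard' hmap
      have hA' := href A hA
      have hB' := href B hB
      refine ⟨A, hA, B, hB, hAB, f A, ?_, ?_⟩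
      · simp only [hf, dif_pos hA']; exact hA'.choose_spec
      · rw [hfAB]; simp only [hf, dif_pos hB']; exact hB'.choose_spec
    obtain ⟨A, hA, B, hB, hAB, k, hAk, hBk⟩ := hpi
    obtain ⟨i₀, hi₀, j₀, hj₀, hAB_eq⟩ :=
      cLink_exists_eq d (hpart.1 A hA) (hpart.1 B hB)
    have hij : i₀ ≠ j₀ := by
      intro h
      exact Finset.disjoint_left.mp (hpart.2.2 A hA B hB hAB) hi₀ (h ▸ hj₀)
    obtain ⟨a, ha⟩ := hpart.1 C hC
    obtain ⟨b, hb⟩ := hpart.1 C' hC'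
    have hlt : d i₀ j₀ < d a b :=
      hsep k i₀ (hAk hi₀) j₀ (hBk hj₀) hij k₁ k₂ hk a (hk₁ ha) b (hk₂ hb)
    have h1 : cLink d C C' ≤ cLink d A B := hmin A hA B hB hAB
    have h2 : (d a b : EReal) ≤ cLink d C C' := le_cLink d ha hb
    rw [hAB_eq] at h1
    have hlt' : (d i₀ j₀ : EReal) < (d a b : EReal) := EReal.coe_lt_coe_iff.2 hlt
    exact absurd (h2.trans h1) (not_le.2 hlt')
  · exact href D (Finset.mem_of_mem_erase (Finset.mem_of_mem_erase hD))

/-- Phase 2: merging preserves "every group is contained in some cluster". -/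
lemma step_phase2 {n K₀ : ℕ} {d : Fin n → Fin n → ℝ} {G : Fin K₀ → Finset (Fin n)}
    {P Q : Finset (Finset (Fin n))} (hm : IsMergeStep d P Q)
    (h : ∀ k, ∃ D ∈ P, G k ⊆ D) : ∀ k, ∃ D ∈ Q, G k ⊆ D := by
  obtain ⟨C, hC, C', hC', hne, _, rfl⟩ := hm
  intro k
  obtain ⟨D, hD, hsub⟩ := h k
  by_cases h1 : D = C
  · exact ⟨C ∪ C', Finset.mem_insert_self _ _,
      (h1 ▸ hsub).trans Finset.subset_union_left⟩
  by_cases h2 : D = C'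
  · exact ⟨C ∪ C', Finset.mem_insert_self _ _,
      (h2 ▸ hsub).trans Finset.subset_union_right⟩
  · exact ⟨D, Finset.mem_insert_of_mem (mem_erase.2 ⟨h2, mem_erase.2 ⟨h1, hD⟩⟩), hsub⟩


/-- **Deterministic core of Theorem 1(c).** If the group partition is `d`-separated, then
for every tie-breaking and every integer `K` with `1 ≤ K < K₀`, the group partition is a
refinement of the HAC partition into `K` clusters. -/
theorem hac_coarsening_below {n K₀ : ℕ} (hn : 1 ≤ n)
    (d : Fin n → Fin n → ℝ) (hsym : ∀ i j, d i j = d j i)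
    (G : Fin K₀ → Finset (Fin n)) (hG : IsGroupPartition G)
    (hsep : IsSeparated d G)
    (P : ℕ → Finset (Finset (Fin n))) (hP : IsHACChain d P)
    (K : ℕ) (hK₁ : 1 ≤ K) (hK₂ : K < K₀) :
    IsRefinement (Finset.univ.image G) (P (n - K)) := by
  have hK₀2 : 2 ≤ K₀ := by omega
  have hK₀pos : 0 < K₀ := by omega
  -- singletons refine G
  have hsref : ∀ C ∈ singletonPartition n, ∃ k, C ⊆ G k := by
    intro C hC
    simp only [singletonPartition, mem_image, mem_univ, true_and] at hC
    obtain ⟨i, rfl⟩ := hC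
    obtain ⟨k, hk⟩ := hG.2.1 i
    exact ⟨k, Finset.singleton_subset_iff.2 hk⟩
  -- K₀ ≤ n
  have hK₀n : K₀ ≤ n := by
    have := (refine_card hG (isPart_singleton n) hsref).1
    rwa [card_singletonPartition] at this
  -- Phase 1 invariant
  have phase1 : ∀ r, r ≤ n - K₀ →
      IsPart (P r) ∧ (P r).card = n - r ∧ (∀ C ∈ P r, ∃ k, C ⊆ G k) := by
    intro r
    induction r with
    | zero =>
      intro _
      rw [hP.1]
      exact ⟨isPart_singleton n, by rw [card_singletonPartition]; omega, hsref⟩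
    | succ r ih =>
      intro hr
      have hr' : r ≤ n - K₀ := by omega
      obtain ⟨hpart, hcard, href⟩ := ih hr'
      have hrn : r < n - 1 := by omega
      have hm := hP.2 r hrn
      have hKlt : K₀ < (P r).card := by omega
      obtain ⟨hpartQ, hcardQ⟩ := merge_isPart hpart hm
      refine ⟨hpartQ, by omega, step_phase1 hG hsep hK₀pos hpart href hKlt hm⟩
  -- at r = n - K₀ : G refines P (n - K₀)
  have hbase : ∀ k, ∃ D ∈ P (n - K₀), G k ⊆ D := by
    obtain ⟨hpart, hcard, href⟩ := phase1 (n - K₀) le_rfl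
    exact (refine_card hG hpart href).2 (by omega)
  -- Phase 2
  have phase2 : ∀ r, n - K₀ ≤ r → r ≤ n - K → ∀ k, ∃ D ∈ P r, G k ⊆ D := by
    intro r
    induction r with
    | zero =>
      intro h1 _
      have : n - K₀ = 0 := by omega
      exact this ▸ hbase
    | succ r ih =>
      intro h1 h2
      by_cases hr : n - K₀ ≤ r
      · have hm := hP.2 r (by omega)
        exact step_phase2 hm (ih hr (by omega))
      · have : n - K₀ = r + 1 := by omega
        exact this ▸ hbase
  intro C hC
  obtain ⟨k, _, rfl⟩ := Finset.mem_image.1 hC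
  exact phase2 (n - K) (by omega) le_rfl k
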